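/- A polynomial g ∈ ℂ[λ,∂] satisfies the identity (λ−μ)·g(λ+μ,∂) = g(μ,λ+∂)·g(λ,∂) − g(λ,μ+∂)·g(μ,∂) in ℂ[λ,μ,∂] if and only if either g = 0 or there exist e, f ∈ ℂ such that g(λ,∂) = ∂ + eλ + f. -/

import Mathlib

open MvPolynomial

noncomputable section

/-- Polynomials in `ℂ[λ, ∂]`: variable `0` is `λ`, variable `1` is `∂`. -/
abbrev P2 : Type := MvPolynomial (Fin 2) ℂ

/-- Polynomials in `ℂ[λ, μ, ∂]`: variable `0` is `λ`, variable `1` is `μ`, variable `2` is `∂`. -/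
abbrev P3 : Type := MvPolynomial (Fin 3) ℂ

/-- Substitution: `sb p u v` is `p(u, v)`, the image of `p` under `λ ↦ u`, `∂ ↦ v`. -/
def sb {n : ℕ} (p : P2) (u v : MvPolynomial (Fin n) ℂ) : MvPolynomial (Fin n) ℂ :=
  aeval ![u, v] p

/-- `λ` in `ℂ[λ,μ,∂]`. -/
def lm : P3 := X 0
/-- `μ` in `ℂ[λ,μ,∂]`. -/
def mu : P3 := X 1
/-- `∂` in `ℂ[λ,μ,∂]`. -/
def pa : P3 := X 2
/-- `λ` in `ℂ[λ,∂]`. -/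
def lm' : P2 := X 0
/-- `∂` in `ℂ[λ,∂]`. -/
def pa' : P2 := X 1

abbrev R2 : Type := MvPolynomial (Fin 2) ℂ

namespace Aux

def l : R2 := X 0
def u : R2 := X 1

lemma hlu : l - u ≠ 0 := sub_ne_zero.mpr (MvPolynomial.X_injective.ne (by decide))

/-- transfer an algebra hom through `MvPolynomial.aeval`. -/
lemma aeval_map {σ : Type} {S T : Type*} [CommSemiring S] [CommSemiring T]
    [Algebra ℂ S] [Algebra ℂ T] (Φ : S →ₐ[ℂ] T) (v : σ → S) (w : σ → T)
    (hw : ∀ i, Φ (v i) = w i) (g : MvPolynomial σ ℂ) :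
    Φ (MvPolynomial.aeval v g) = MvPolynomial.aeval w g := by
  rw [MvPolynomial.comp_aeval_apply, show (fun i => Φ (v i)) = w from funext hw]

def σR : R2 →ₐ[ℂ] R2 := MvPolynomial.aeval ![X 0 + X 1, X 1]
def τR : R2 →ₐ[ℂ] R2 := MvPolynomial.aeval ![X 1, X 0]

lemma σR_l : σR l = l + u := by simp [σR, l, u]
lemma σR_u : σR u = u := by simp [σR, u]
lemma τR_l : τR l = u := by simp [τR, l, u]
lemma τR_u : τR u = l := by simp [τR, l, u]

lemma σR_inj : Function.Injective σR := by
  have h : ∀ r, (MvPolynomial.aeval ![X 0 - X 1, X 1] : R2 →ₐ[ℂ] R2) (σR r) = r := by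
    intro r
    rw [σR, aeval_map _ ![X 0 + X 1, X 1] (fun i => X i)
      (by intro i; fin_cases i <;> simp) r]
    exact MvPolynomial.aeval_X_left_apply r
  intro x y hxy
  rw [← h x, ← h y, hxy]

lemma τR_inj : Function.Injective τR := by
  have h : ∀ r, τR (τR r) = r := by
    intro r
    rw [τR, aeval_map _ ![X 1, X 0] (fun i => X i)
      (by intro i; fin_cases i <;> simp [τR]) r]
    exact MvPolynomial.aeval_X_left_apply r
  intro x y hxy
  rw [← h x, ← h y, hxy]

def ι : Polynomial ℂ →ₐ[ℂ] R2 := Polynomial.aeval (X 0)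

lemma ι_apply (f : Polynomial ℂ) : ι f = Polynomial.aeval l f := rfl

def Θ₀ : P2 →ₐ[ℂ] Polynomial (Polynomial ℂ) :=
  MvPolynomial.aeval ![Polynomial.C Polynomial.X, Polynomial.X]

lemma Θ₀_inj : Function.Injective Θ₀ := by
  set Φ : Polynomial (Polynomial ℂ) →ₐ[ℂ] P2 :=
    ((Polynomial.aeval pa').restrictScalars ℂ).comp
      (Polynomial.mapAlgHom (Polynomial.aeval lm')) with hΦ
  have h : ∀ r : P2, Φ (Θ₀ r) = r := by
    intro r
    rw [Θ₀, aeval_map Φ _ (fun i => X i) ?_ r]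
    · exact MvPolynomial.aeval_X_left_apply r
    · intro i
      fin_cases i <;>
        simp [hΦ, Polynomial.coe_mapAlgHom, Polynomial.map_C, Polynomial.aeval_X, lm', pa']
  intro x y hxy
  rw [← h x, ← h y, hxy]

def ΘR : P2 →ₐ[ℂ] Polynomial R2 :=
  MvPolynomial.aeval ![Polynomial.C (X 0), Polynomial.X]

lemma ΘR_eq (g : P2) : ΘR g = Polynomial.map ι.toRingHom (Θ₀ g) := by
  rw [show Polynomial.map ι.toRingHom (Θ₀ g) = Polynomial.mapAlgHom ι (Θ₀ g) from rfl, Θ₀,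
    aeval_map (Polynomial.mapAlgHom ι) _ ![Polynomial.C (X 0), Polynomial.X] ?_ g]
  · rfl
  · intro i
    fin_cases i <;>
      simp [Polynomial.coe_mapAlgHom, Polynomial.map_C, ι, Polynomial.aeval_X]

def ΞR : P3 →ₐ[ℂ] Polynomial R2 :=
  MvPolynomial.aeval ![Polynomial.C (X 0), Polynomial.C (X 1), Polynomial.X]

/-- `taylor` as a `ℂ`-algebra hom on `R2[X]`. -/
def T (r : R2) : Polynomial R2 →ₐ[ℂ] Polynomial R2 :=
  (Polynomial.aeval (Polynomial.X + Polynomial.C r)).restrictScalars ℂ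

lemma T_apply (r : R2) (f : Polynomial R2) : T r f = Polynomial.taylor r f := by
  rw [Polynomial.taylor_apply, Polynomial.comp, T, AlgHom.coe_restrictScalars',
    Polynomial.aeval_def, Polynomial.algebraMap_eq]



lemma coeff_mul_odd {S : Type*} [CommSemiring S] (a b : Polynomial S) (k : ℕ)
    (ha : a.natDegree ≤ k+1) (hb : b.natDegree ≤ k+1) :
    (a * b).coeff (2*k+1) =
      a.coeff (k+1) * b.coeff k + a.coeff k * b.coeff (k+1) := by
  rw [Polynomial.coeff_mul]
  have key : ∑ x ∈ Finset.HasAntidiagonal.antidiagonal (2*k+1), a.coeff x.1 * b.coeff x.2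
      = ∑ x ∈ ({(k+1, k), (k, k+1)} : Finset (ℕ×ℕ)), a.coeff x.1 * b.coeff x.2 := by
    refine (Finset.sum_subset ?_ ?_).symm
    · intro x hx
      simp only [Finset.mem_insert, Finset.mem_singleton] at hx
      rcases hx with h|h <;> subst h <;> simp [Finset.mem_antidiagonal] <;> omega
    · rintro ⟨i, j⟩ hx hnx
      simp only [Finset.HasAntidiagonal.mem_antidiagonal] at hx
      simp only [Finset.mem_insert, Finset.mem_singleton, Prod.mk.injEq, not_or, not_and] at hnx
      rcases Nat.lt_or_ge (k+1) i with h | h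
      · rw [Polynomial.coeff_eq_zero_of_natDegree_lt (lt_of_le_of_lt ha h), zero_mul]
      · have hj : k+1 < j := by
          obtain ⟨h1, h2⟩ := hnx
          have e1 : i ≠ k+1 := fun h => h1 h (by omega)
          have e2 : i ≠ k := fun h => h2 h (by omega)
          omega
        rw [Polynomial.coeff_eq_zero_of_natDegree_lt (lt_of_le_of_lt hb hj), mul_zero]
  rw [key, Finset.sum_pair (by simp)]

lemma taylor_coeff_top {S : Type*} [CommRing S] (r : S) (f : Polynomial S) (m : ℕ) (hf : f.natDegree ≤ m) :
    (Polynomial.taylor r f).coeff m = f.coeff m := by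
  rw [Polynomial.taylor_coeff]
  have h : Polynomial.hasseDeriv m f = Polynomial.C (f.coeff m) := by
    ext j
    rw [Polynomial.hasseDeriv_coeff]
    cases j with
    | zero => simp
    | succ n =>
      rw [Polynomial.coeff_eq_zero_of_natDegree_lt (by omega : f.natDegree < n+1+m)]
      simp [Polynomial.coeff_C]
  rw [h, Polynomial.eval_C]

lemma taylor_coeff_snd {S : Type*} [CommRing S] (r : S) (f : Polynomial S) (k : ℕ)
    (hf : f.natDegree ≤ k+1) :
    (Polynomial.taylor r f).coeff k = f.coeff k + (k+1 : ℕ) * r * f.coeff (k+1) := by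
  rw [Polynomial.taylor_coeff]
  have h : Polynomial.hasseDeriv k f
      = Polynomial.C (f.coeff k) + Polynomial.C ((k+1 : ℕ) * f.coeff (k+1)) * Polynomial.X := by
    ext j
    rw [Polynomial.hasseDeriv_coeff]
    match j with
    | 0 => simp
    | 1 =>
      simp only [Polynomial.coeff_add, Polynomial.coeff_C, Polynomial.coeff_C_mul,
        Polynomial.coeff_X_one, if_neg (one_ne_zero), mul_one, zero_add]
      rw [Nat.add_comm 1 k, Nat.choose_succ_self_right]
    | (n+2) =>
      rw [Polynomial.coeff_eq_zero_of_natDegree_lt (by omega : f.natDegree < n+2+k)]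
      simp [Polynomial.coeff_C, Polynomial.coeff_C_mul, Polynomial.coeff_X, Polynomial.coeff_one]
  rw [h]
  simp only [Polynomial.eval_add, Polynomial.eval_C, Polynomial.eval_mul, Polynomial.eval_X]
  push_cast
  ring

lemma main_eq (g : P2)
    (H : (lm - mu) * sb g (lm + mu) pa =
        sb g mu (lm + pa) * sb g lm pa - sb g lm (mu + pa) * sb g mu pa) :
    (Polynomial.C l - Polynomial.C u) * Polynomial.map σR.toRingHom (ΘR g) =
      Polynomial.taylor l (Polynomial.map τR.toRingHom (ΘR g)) * ΘR g
      - Polynomial.taylor u (ΘR g) * Polynomial.map τR.toRingHom (ΘR g) := by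
  have h := congrArg ΞR H
  have h3 : ΞR (sb g lm pa) = ΘR g := by
    rw [sb, aeval_map ΞR _ ![Polynomial.C (X 0), Polynomial.X]
      (by intro i; fin_cases i <;> simp [ΞR, lm, pa]) g]
    rfl
  have w5 : ΞR (sb g mu pa) = aeval ![Polynomial.C (X 1), Polynomial.X] g := by
    rw [sb, aeval_map ΞR _ ![Polynomial.C (X 1), Polynomial.X]
      (by intro i; fin_cases i <;> simp [ΞR, mu, pa]) g]
  have h5 : ΞR (sb g mu pa) = Polynomial.map τR.toRingHom (ΘR g) := by
    rw [w5, show Polynomial.map τR.toRingHom (ΘR g) = Polynomial.mapAlgHom τR (ΘR g) from rfl, ΘR,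
      aeval_map (Polynomial.mapAlgHom τR) _ ![Polynomial.C (X 1), Polynomial.X]
      (by intro i; fin_cases i <;>
        simp [Polynomial.coe_mapAlgHom, Polynomial.map_C, τR]) g]
  have h1 : ΞR (sb g (lm + mu) pa) = Polynomial.map σR.toRingHom (ΘR g) := by
    rw [sb, aeval_map ΞR _ ![Polynomial.C (X 0) + Polynomial.C (X 1), Polynomial.X]
      (by intro i; fin_cases i <;> simp [ΞR, lm, mu, pa]) g]
    rw [show Polynomial.map σR.toRingHom (ΘR g) = Polynomial.mapAlgHom σR (ΘR g) from rfl, ΘR,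
      aeval_map (Polynomial.mapAlgHom σR) _ ![Polynomial.C (X 0) + Polynomial.C (X 1), Polynomial.X]
      (by intro i; fin_cases i <;>
        simp [Polynomial.coe_mapAlgHom, Polynomial.map_C, σR]) g]
  have h2 : ΞR (sb g mu (lm + pa)) =
      Polynomial.taylor l (Polynomial.map τR.toRingHom (ΘR g)) := by
    have step1 : ΞR (sb g mu (lm + pa)) =
        aeval ![Polynomial.C (X 1), Polynomial.X + Polynomial.C (X 0)] g := by
      rw [sb, aeval_map ΞR _ ![Polynomial.C (X 1), Polynomial.X + Polynomial.C (X 0)]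
        (by intro i; fin_cases i <;> simp [ΞR, lm, mu, pa] <;> ring) g]
    have step2 : T l (aeval ![Polynomial.C (X 1), Polynomial.X] g) =
        aeval ![Polynomial.C (X 1), Polynomial.X + Polynomial.C (X 0)] g := by
      rw [aeval_map (T l) _ ![Polynomial.C (X 1), Polynomial.X + Polynomial.C (X 0)]
        (by intro i; fin_cases i <;>
          simp [T, AlgHom.coe_restrictScalars', Polynomial.aeval_C, Polynomial.algebraMap_eq, l]) g]
    rw [step1, ← step2, ← w5, h5, T_apply]
  have h4 : ΞR (sb g lm (mu + pa)) = Polynomial.taylor u (ΘR g) := by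
    have step1 : ΞR (sb g lm (mu + pa)) =
        aeval ![Polynomial.C (X 0), Polynomial.X + Polynomial.C (X 1)] g := by
      rw [sb, aeval_map ΞR _ ![Polynomial.C (X 0), Polynomial.X + Polynomial.C (X 1)]
        (by intro i; fin_cases i <;> simp [ΞR, lm, mu, pa] <;> ring) g]
    have step2 : T u (aeval ![Polynomial.C (X 0), Polynomial.X] g) =
        aeval ![Polynomial.C (X 0), Polynomial.X + Polynomial.C (X 1)] g := by
      rw [aeval_map (T u) _ ![Polynomial.C (X 0), Polynomial.X + Polynomial.C (X 1)]
        (by intro i; fin_cases i <;>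
          simp [T, AlgHom.coe_restrictScalars', Polynomial.aeval_C, Polynomial.algebraMap_eq, u]) g]
    rw [step1, ← step2, ← T_apply]
    rfl
  have hlm : ΞR lm = Polynomial.C l := by simp [ΞR, lm, l]
  have hmu : ΞR mu = Polynomial.C u := by simp [ΞR, mu, u]
  rw [map_mul, map_sub, map_sub, map_mul, map_mul, h1, h2, h3, h4, h5, hlm, hmu] at h
  exact h


lemma degree_le_one (g : P2)
    (H : (lm - mu) * sb g (lm + mu) pa =
        sb g mu (lm + pa) * sb g lm pa - sb g lm (mu + pa) * sb g mu pa) :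
    (ΘR g).natDegree ≤ 1 := by
  by_contra hdeg
  push_neg at hdeg
  set p : Polynomial R2 := ΘR g with hpdef
  obtain ⟨k, hk, hk1⟩ : ∃ k, p.natDegree = k + 1 ∧ 1 ≤ k := ⟨p.natDegree - 1, by omega, by omega⟩
  have hp0 : p ≠ 0 := by
    intro h0
    rw [h0, Polynomial.natDegree_zero] at hk
    omega
  set q : Polynomial R2 := Polynomial.map τR.toRingHom p with hqdef
  set A : Polynomial R2 := Polynomial.map σR.toRingHom p with hAdef
  have E := main_eq g H
  rw [← hpdef, ← hqdef, ← hAdef] at E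
  have hqdeg : q.natDegree = k + 1 := by
    rw [hqdef, Polynomial.natDegree_map_eq_of_injective τR_inj, hk]
  have hAdeg : A.natDegree = k + 1 := by
    rw [hAdef, Polynomial.natDegree_map_eq_of_injective σR_inj, hk]
  have hc := congrArg (fun s => Polynomial.coeff s (2*k+1)) E
  rw [← Polynomial.C_sub, Polynomial.coeff_C_mul,
    Polynomial.coeff_eq_zero_of_natDegree_lt (by omega : A.natDegree < 2*k+1), mul_zero,
    Polynomial.coeff_sub,
    coeff_mul_odd _ _ k (by rw [Polynomial.natDegree_taylor, hqdeg]) hk.le,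
    coeff_mul_odd _ _ k (by rw [Polynomial.natDegree_taylor, hk]) hqdeg.le,
    taylor_coeff_top l q (k+1) hqdeg.le, taylor_coeff_snd l q k hqdeg.le,
    taylor_coeff_top u p (k+1) hk.le, taylor_coeff_snd u p k hk.le] at hc
  have hq1 : q.coeff (k+1) = τR (p.coeff (k+1)) := by
    rw [hqdef, Polynomial.coeff_map]; rfl
  have hq0 : q.coeff k = τR (p.coeff k) := by
    rw [hqdef, Polynomial.coeff_map]; rfl
  rw [hq1, hq0] at hc
  have key : ((k+1 : ℕ) : R2) * (l - u) * (p.coeff (k+1) * τR (p.coeff (k+1))) = 0 := by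
    linear_combination -hc
  have hpc : p.coeff (k+1) ≠ 0 := by
    rw [← hk]
    exact mt Polynomial.leadingCoeff_eq_zero.mp hp0
  have hτpc : τR (p.coeff (k+1)) ≠ 0 := by
    intro h0
    exact hpc (τR_inj (by simpa using h0))
  have hk0 : ((k+1 : ℕ) : R2) ≠ 0 := Nat.cast_ne_zero.mpr (by omega)
  exact (mul_ne_zero (mul_ne_zero hk0 hlu) (mul_ne_zero hpc hτpc)) key


lemma ι_inj : Function.Injective ι := by
  intro x y hxy
  have h : ∀ t, (MvPolynomial.aeval ![(Polynomial.X : Polynomial ℂ), 0] : R2 →ₐ[ℂ] Polynomial ℂ)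
      (ι t) = t := by
    intro t
    rw [ι_apply, ← Polynomial.aeval_algHom_apply]
    simp [l, Polynomial.aeval_X_left_apply]
  rw [← h x, ← h y, hxy]

lemma forward (g : P2)
    (H : (lm - mu) * sb g (lm + mu) pa =
        sb g mu (lm + pa) * sb g lm pa - sb g lm (mu + pa) * sb g mu pa) :
    g = 0 ∨ ∃ e f : ℂ, g = pa' + C e * lm' + C f := by
  have E := main_eq g H
  have hdeg := degree_le_one g H
  set p : Polynomial R2 := ΘR g with hpdef
  set a : R2 := p.coeff 0 with hadef
  set b : R2 := p.coeff 1 with hbdef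
  have hp : p = Polynomial.C b * Polynomial.X + Polynomial.C a :=
    Polynomial.eq_X_add_C_of_natDegree_le_one hdeg
  have hq : Polynomial.map τR.toRingHom p
      = Polynomial.C (τR b) * Polynomial.X + Polynomial.C (τR a) := by
    rw [hp]; simp
  have hA : Polynomial.map σR.toRingHom p
      = Polynomial.C (σR b) * Polynomial.X + Polynomial.C (σR a) := by
    rw [hp]; simp
  rw [hq, hA] at E
  have htq : Polynomial.taylor l (Polynomial.C (τR b) * Polynomial.X + Polynomial.C (τR a))
      = Polynomial.C (τR b) * (Polynomial.X + Polynomial.C l) + Polynomial.C (τR a) := by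
    rw [Polynomial.taylor_apply]
    simp [Polynomial.add_comp, Polynomial.mul_comp, Polynomial.C_comp, Polynomial.X_comp]
  have htp : Polynomial.taylor u (Polynomial.C b * Polynomial.X + Polynomial.C a)
      = Polynomial.C b * (Polynomial.X + Polynomial.C u) + Polynomial.C a := by
    rw [Polynomial.taylor_apply]
    simp [Polynomial.add_comp, Polynomial.mul_comp, Polynomial.C_comp, Polynomial.X_comp]
  rw [hp, htq, htp] at E
  have e2 : (l - u) * σR a = (τR a + τR b * l) * a - (a + b * u) * τR a := by
    have h := congrArg (Polynomial.eval 0) E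
    simp only [Polynomial.eval_add, Polynomial.eval_sub, Polynomial.eval_mul, Polynomial.eval_C,
      Polynomial.eval_X, add_zero, zero_add, mul_zero, zero_mul] at h
    linear_combination h
  have e1 : σR b = b * τR b := by
    have h := congrArg (fun s => Polynomial.eval 0 (Polynomial.derivative s)) E
    simp only [Polynomial.derivative_mul, Polynomial.derivative_add, Polynomial.derivative_sub,
      Polynomial.derivative_C, Polynomial.derivative_X, Polynomial.eval_add, Polynomial.eval_sub,
      Polynomial.eval_mul, Polynomial.eval_C, Polynomial.eval_X, Polynomial.eval_one,
      Polynomial.eval_zero, add_zero, zero_add, mul_zero, zero_mul, mul_one, one_mul] at h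
    apply mul_left_cancel₀ hlu
    linear_combination h
  -- one-variable coefficients
  set a₀ : Polynomial ℂ := (Θ₀ g).coeff 0 with ha₀def
  set b₀ : Polynomial ℂ := (Θ₀ g).coeff 1 with hb₀def
  have hTheta : p = Polynomial.map ι.toRingHom (Θ₀ g) := ΘR_eq g
  have ha' : a = ι a₀ := by rw [hadef, hTheta, Polynomial.coeff_map]; rfl
  have hb' : b = ι b₀ := by rw [hbdef, hTheta, Polynomial.coeff_map]; rfl
  have hσι : ∀ x : Polynomial ℂ, σR (ι x) = Polynomial.aeval (l + u) x := by
    intro x; rw [ι_apply, ← Polynomial.aeval_algHom_apply, σR_l]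
  have hτι : ∀ x : Polynomial ℂ, τR (ι x) = Polynomial.aeval u x := by
    intro x; rw [ι_apply, ← Polynomial.aeval_algHom_apply, τR_l]
  have hcomp : ∀ (q f : Polynomial ℂ), Polynomial.aeval q f = f.comp q := by
    intro q f; rw [Polynomial.aeval_def, Polynomial.comp, Polynomial.algebraMap_eq]
  have eb : Polynomial.aeval (l+u) b₀ = Polynomial.aeval l b₀ * Polynomial.aeval u b₀ := by
    rw [← hσι, ← hτι, ← ι_apply, ← hb', e1]
  set Φ0 : R2 →ₐ[ℂ] Polynomial ℂ := MvPolynomial.aeval ![Polynomial.X, 0] with hΦ0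
  set Φ1 : R2 →ₐ[ℂ] Polynomial ℂ := MvPolynomial.aeval ![Polynomial.X, Polynomial.X] with hΦ1
  set Φt : R2 →ₐ[ℂ] Polynomial ℂ := MvPolynomial.aeval ![Polynomial.X, 1] with hΦt
  have haev0 : Polynomial.aeval (0 : Polynomial ℂ) b₀ = Polynomial.C (b₀.coeff 0) := by
    rw [Polynomial.aeval_def, Polynomial.eval₂_at_zero, Polynomial.algebraMap_eq]
  have eq0 : b₀ = b₀ * Polynomial.C (b₀.coeff 0) := by
    have h := congrArg Φ0 eb
    rw [map_mul, ← Polynomial.aeval_algHom_apply, ← Polynomial.aeval_algHom_apply,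
      ← Polynomial.aeval_algHom_apply] at h
    simp only [hΦ0, map_add, l, u, aeval_X, Matrix.cons_val_zero, Matrix.cons_val_one,
      Matrix.head_cons, add_zero] at h
    rw [Polynomial.aeval_X_left_apply, haev0] at h
    exact h
  have eq1 : b₀.comp (Polynomial.X + Polynomial.X) = b₀ * b₀ := by
    have h := congrArg Φ1 eb
    rw [map_mul, ← Polynomial.aeval_algHom_apply, ← Polynomial.aeval_algHom_apply,
      ← Polynomial.aeval_algHom_apply] at h
    simp only [hΦ1, map_add, l, u, aeval_X, Matrix.cons_val_zero, Matrix.cons_val_one,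
      Matrix.head_cons] at h
    rw [Polynomial.aeval_X_left_apply, hcomp] at h
    exact h
  have hdeg0 : (Θ₀ g).natDegree ≤ 1 := by
    have h := Polynomial.natDegree_map_eq_of_injective (f := ι.toRingHom) ι_inj (Θ₀ g)
    rw [← hTheta] at h
    rw [← h]
    exact hdeg
  by_cases hb0 : b₀ = 0
  · -- then g = 0
    left
    have hbz : b = 0 := by rw [hb', hb0, map_zero]
    have hσa : σR a = 0 := by
      have h2 : (l - u) * σR a = 0 := by
        rw [hbz] at e2
        simp only [map_zero, zero_mul, mul_zero, add_zero] at e2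
        linear_combination e2
      rcases mul_eq_zero.mp h2 with h | h
      · exact absurd h hlu
      · exact h
    have haz : a = 0 := σR_inj (by rw [hσa, map_zero])
    have ha₀z : a₀ = 0 := ι_inj (by rw [← ha', haz, map_zero])
    have hzero : Θ₀ g = 0 := by
      rw [Polynomial.eq_X_add_C_of_natDegree_le_one hdeg0, ← hb₀def, ← ha₀def, hb0, ha₀z]
      simp
    exact Θ₀_inj (by rw [hzero, map_zero])
  · -- b₀ = 1 and a₀ is affine
    have hdb : b₀.natDegree = 0 := by
      have hXX : (Polynomial.X + Polynomial.X : Polynomial ℂ).natDegree = 1 := by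
        rw [← two_mul, show ((2 : Polynomial ℂ)) = Polynomial.C 2 from (map_ofNat Polynomial.C 2).symm,
          Polynomial.natDegree_C_mul two_ne_zero, Polynomial.natDegree_X]
      have h1 : b₀.natDegree * (Polynomial.X + Polynomial.X : Polynomial ℂ).natDegree
          = b₀.natDegree + b₀.natDegree := by
        rw [← Polynomial.natDegree_comp, eq1, Polynomial.natDegree_mul hb0 hb0]
      rw [hXX] at h1
      omega
    have hbc : b₀ = Polynomial.C (b₀.coeff 0) := Polynomial.eq_C_of_natDegree_eq_zero hdb
    have hone : (1 : Polynomial ℂ) = Polynomial.C (b₀.coeff 0) :=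
      mul_left_cancel₀ hb0 (by linear_combination eq0)
    have hb1 : b₀ = 1 := by rw [hbc, ← hone]
    have hbone : b = 1 := by rw [hb', hb1, map_one]
    have ea : (l - u) * Polynomial.aeval (l+u) a₀
        = l * Polynomial.aeval l a₀ - u * Polynomial.aeval u a₀ := by
      rw [hbone] at e2
      simp only [map_one, one_mul, mul_one] at e2
      rw [ha', hσι, hτι, ι_apply] at e2
      linear_combination e2
    have t1 : Polynomial.aeval (Polynomial.X + 1 : Polynomial ℂ) a₀ = Polynomial.taylor 1 a₀ := by
      rw [hcomp, Polynomial.taylor_apply, Polynomial.C_1]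
    have t2 : Polynomial.aeval (1 : Polynomial ℂ) a₀ = Polynomial.C (a₀.eval 1) := by
      rw [hcomp, ← Polynomial.C_1, Polynomial.comp_C]
    have EQt : Polynomial.X * Polynomial.taylor 1 a₀ - Polynomial.taylor 1 a₀
        = Polynomial.X * a₀ - Polynomial.C (a₀.eval 1) := by
      have h := congrArg Φt ea
      rw [map_sub, map_mul, map_mul, map_mul, ← Polynomial.aeval_algHom_apply,
        ← Polynomial.aeval_algHom_apply, ← Polynomial.aeval_algHom_apply] at h
      simp only [hΦt, map_sub, map_add, l, u, aeval_X, Matrix.cons_val_zero, Matrix.cons_val_one,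
        Matrix.head_cons] at h
      rw [Polynomial.aeval_X_left_apply, t1, t2] at h
      linear_combination h
    have hna : a₀.natDegree ≤ 1 := by
      by_contra hna'
      push_neg at hna'
      obtain ⟨k, hk⟩ : ∃ k, a₀.natDegree = k + 2 := ⟨a₀.natDegree - 2, by omega⟩
      have ha00 : a₀ ≠ 0 := by
        intro h0; rw [h0, Polynomial.natDegree_zero] at hk; omega
      have hc := congrArg (fun s => Polynomial.coeff s (k+2)) EQt
      simp only [Polynomial.coeff_sub] at hc
      rw [show k+2 = (k+1)+1 from rfl, Polynomial.coeff_X_mul, Polynomial.coeff_X_mul,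
        taylor_coeff_top (1:ℂ) a₀ (k+1+1) (by omega), taylor_coeff_snd (1:ℂ) a₀ (k+1) (by omega),
        Polynomial.coeff_C, if_neg (by omega)] at hc
      have hcc : a₀.coeff (k+1+1) ≠ 0 := by
        rw [show k+1+1 = k+2 from rfl, ← hk]
        exact mt Polynomial.leadingCoeff_eq_zero.mp ha00
      have hkey : ((k:ℂ) + 1) * a₀.coeff (k+1+1) = 0 := by
        push_cast at hc
        linear_combination hc
      rcases mul_eq_zero.mp hkey with h | h
      · exact Nat.cast_add_one_ne_zero k h
      · exact hcc h
    obtain ⟨e, f, hef⟩ : ∃ e f : ℂ, a₀ = Polynomial.C e * Polynomial.X + Polynomial.C f :=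
      ⟨_, _, Polynomial.eq_X_add_C_of_natDegree_le_one hna⟩
    right
    refine ⟨e, f, ?_⟩
    have hform : Θ₀ g = Polynomial.C 1 * Polynomial.X + Polynomial.C a₀ := by
      rw [Polynomial.eq_X_add_C_of_natDegree_le_one hdeg0, ← hb₀def, ← ha₀def, hb1]
    have htarget : Θ₀ (pa' + C e * lm' + C f)
        = Polynomial.C 1 * Polynomial.X + Polynomial.C a₀ := by
      rw [hef, Θ₀]
      simp only [map_add, map_mul, aeval_X, aeval_C, Matrix.cons_val_zero, Matrix.cons_val_one,
        Matrix.head_cons, lm', pa', Polynomial.algebraMap_apply, Polynomial.algebraMap_eq,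
        Polynomial.C_add, Polynomial.C_mul, Polynomial.C_1, one_mul]
      ring
    exact Θ₀_inj (hform.trans htarget.symm)

end Aux


/-- `g ∈ ℂ[λ,∂]` satisfies
`(λ−μ)·g(λ+μ,∂) = g(μ,λ+∂)·g(λ,∂) − g(λ,μ+∂)·g(μ,∂)` iff `g = 0` or
`g(λ,∂) = ∂ + eλ + f` for some `e, f ∈ ℂ`. -/
theorem stmt1 (g : P2) :
    ((lm - mu) * sb g (lm + mu) pa =
        sb g mu (lm + pa) * sb g lm pa - sb g lm (mu + pa) * sb g mu pa) ↔
    (g = 0 ∨ ∃ e f : ℂ, g = pa' + C e * lm' + C f) := by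
  constructor
  · exact fun H => Aux.forward g H
  · rintro (rfl | ⟨e, f, rfl⟩)
    · simp [sb]
    · simp only [sb, lm, mu, pa, lm', pa', map_add, map_mul, aeval_X, aeval_C,
        Matrix.cons_val_zero, Matrix.cons_val_one, Matrix.head_cons]
      ring

end
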